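/- Let w be an element of the affine Weyl group of type Â_{n−1}, regarded as an affine permutation matrix ∑ t^{cᵢ} E_{σ(i),i} with σ ∈ S_n and ∑cᵢ = 0. Then the Coxeter length of w equals ∑_{1≤i<j≤n} |cᵢ − cⱼ − f_σ(i,j)|, where f_σ(i,j) = 0 if σ(i) < σ(j) and 1 otherwise. -/

import Mathlib

open Finset

/-- The Coxeter length of an affine permutation `w : ℤ → ℤ` of type Â_{n−1}:
the number of pairs (i, j) with 1 ≤ i ≤ n, i < j and w(i) > w(j). -/
noncomputable def affLength (n : ℕ) (w : ℤ → ℤ) : ℕ :=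
  Nat.card {p : ℤ × ℤ // 1 ≤ p.1 ∧ p.1 ≤ (n : ℤ) ∧ p.1 < p.2 ∧ w p.2 < w p.1}

lemma affediv_neg {N s : ℤ} (h1 : 0 < s) (h2 : s < N) : -s / N = -1 := by
  have e : -s = (N - s) + (-1) * N := by ring
  rw [e, Int.add_mul_ediv_right _ _ (by omega : N ≠ 0),
    Int.ediv_eq_zero_of_lt (by omega) (by omega)]
  ring

lemma affper {n : ℕ} {w : ℤ → ℤ} (hper : ∀ i : ℤ, w (i + n) = w i + n) :
    ∀ (k : ℤ) (i : ℤ), w (i + k * n) = w i + k * n := by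
  have hneg : ∀ i : ℤ, w (i - n) = w i - n := by
    intro i
    have h := hper (i - n)
    have e : i - (n:ℤ) + n = i := by ring
    rw [e] at h; omega
  intro k
  induction k using Int.induction_on with
  | zero => simp
  | succ k ih =>
      intro i
      have h1 : i + ((k:ℤ)+1) * n = (i + k * n) + n := by ring
      rw [h1, hper, ih]; ring
  | pred k ih =>
      intro i
      have h1 : i + (-(k:ℤ)-1) * n = (i + (-(k:ℤ)) * n) - n := by ring
      rw [h1, hneg, ih]; ring

lemma affklt {N : ℤ} (hN : 0 < N) (k D : ℤ) : k * N < D ↔ k < -(-D / N) := by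
  have h1 : -D / N < -k ↔ -D < -k * N := Int.ediv_lt_iff_lt_mul hN
  constructor
  · intro h
    have : -D < -k * N := by nlinarith
    have := h1.mpr this
    omega
  · intro h
    have : -D / N < -k := by omega
    have := h1.mp this
    nlinarith

lemma affcount (n : ℕ) (hn : 0 < n) (w : ℤ → ℤ)
    (hper : ∀ i : ℤ, w (i + n) = w i + n) :
    affLength n w = ∑ p : Fin n × Fin n,
      (Finset.Ico (if p.1 < p.2 then (0:ℕ) else 1)
        ((-(-(w (((p.1:ℕ):ℤ)+1) - w (((p.2:ℕ):ℤ)+1)) / (n:ℤ))).toNat)).card := by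
  classical
  have hN : 0 < (n:ℤ) := by exact_mod_cast hn
  have hperZ := affper hper
  set Kf : Fin n × Fin n → ℤ :=
    fun p => -(-(w (((p.1:ℕ):ℤ)+1) - w (((p.2:ℕ):ℤ)+1)) / (n:ℤ)) with hKf
  set k0 : Fin n × Fin n → ℕ := fun p => if p.1 < p.2 then (0:ℕ) else 1 with hk0
  have key : ∀ (a b : Fin n) (k : ℕ), (k0 (a,b) ≤ k ∧ k < (Kf (a,b)).toNat) ↔
      (((a:ℕ):ℤ)+1 < ((b:ℕ):ℤ)+1 + (k:ℤ)*(n:ℤ) ∧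
        w (((b:ℕ):ℤ)+1 + (k:ℤ)*(n:ℤ)) < w (((a:ℕ):ℤ)+1)) := by
    intro a b k
    have hw2 : w (((b:ℕ):ℤ)+1 + (k:ℤ)*(n:ℤ)) = w (((b:ℕ):ℤ)+1) + (k:ℤ)*(n:ℤ) :=
      hperZ _ _
    have hiff2 : (w (((b:ℕ):ℤ)+1 + (k:ℤ)*(n:ℤ)) < w (((a:ℕ):ℤ)+1)) ↔
        ((k:ℤ) < Kf (a,b)) := by
      rw [hw2, hKf]
      constructor
      · intro h
        exact (affklt hN (k:ℤ) _).mp (by linarith)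
      · intro h
        have := (affklt hN (k:ℤ) _).mpr h
        linarith
    have hcast : (k < (Kf (a,b)).toNat) ↔ ((k:ℤ) < Kf (a,b)) := Int.lt_toNat
    have hiff1 : (((a:ℕ):ℤ)+1 < ((b:ℕ):ℤ)+1 + (k:ℤ)*(n:ℤ)) ↔ (k0 (a,b) ≤ k) := by
      rw [hk0]
      by_cases hab : a < b
      · simp only [if_pos hab]
        have hab' : ((a:ℕ):ℤ) < ((b:ℕ):ℤ) := by exact_mod_cast hab
        have hk' : (0:ℤ) ≤ (k:ℤ)*(n:ℤ) := mul_nonneg (by positivity) (le_of_lt hN)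
        constructor
        · intro _; omega
        · intro _; linarith
      · simp only [if_neg hab]
        have hba : (b:ℕ) ≤ (a:ℕ) := by
          have := not_lt.mp hab
          exact_mod_cast this
        have han : ((a:ℕ):ℤ) < (n:ℤ) := by exact_mod_cast a.isLt
        constructor
        · intro h
          by_contra hk1
          have hk00 : k = 0 := by omega
          rw [hk00] at h
          push_cast at h
          omega
        · intro h
          have h1k : (1:ℤ) ≤ (k:ℤ) := by exact_mod_cast h
          have : (1:ℤ)*(n:ℤ) ≤ (k:ℤ)*(n:ℤ) :=
            mul_le_mul_of_nonneg_right h1k (le_of_lt hN)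
          have hb0 : (0:ℤ) ≤ ((b:ℕ):ℤ) := by positivity
          linarith
    rw [hcast]
    tauto
  -- the bijection
  set f : (Σ p : Fin n × Fin n, {k : ℕ // k ∈ Finset.Ico (k0 p) (Kf p).toNat}) →
      {p : ℤ × ℤ // 1 ≤ p.1 ∧ p.1 ≤ (n : ℤ) ∧ p.1 < p.2 ∧ w p.2 < w p.1} :=
    fun x => ⟨(((x.1.1:ℕ):ℤ)+1, ((x.1.2:ℕ):ℤ)+1 + (x.2.1:ℤ)*(n:ℤ)), by
      obtain ⟨⟨a,b⟩,⟨k,hk⟩⟩ := x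
      rw [Finset.mem_Ico] at hk
      have hkey := (key a b k).mp hk
      have ha1 : ((a:ℕ):ℤ) < (n:ℤ) := by exact_mod_cast a.isLt
      exact ⟨by omega, by omega, hkey.1, hkey.2⟩⟩ with hf
  have hbijf : Function.Bijective f := by
    constructor
    · rintro ⟨⟨a,b⟩,⟨k,hk⟩⟩ ⟨⟨a',b'⟩,⟨k',hk'⟩⟩ h
      rw [hf, Subtype.mk.injEq, Prod.mk.injEq] at h
      dsimp only at h
      obtain ⟨h1, h2⟩ := h
      have haa : a = a' := by
        have : ((a:ℕ):ℤ) = ((a':ℕ):ℤ) := by omega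
        have : (a:ℕ) = (a':ℕ) := by exact_mod_cast this
        exact Fin.ext this
      have hbcast : ∀ (b : Fin n) (k : ℕ),
          (((b:ℕ):ℤ) + (k:ℤ)*(n:ℤ)) % (n:ℤ) = ((b:ℕ):ℤ) := by
        intro b k
        rw [Int.add_mul_emod_self_right]
        exact Int.emod_eq_of_lt (by positivity) (by exact_mod_cast b.isLt)
      have h2' : ((b:ℕ):ℤ) + (k:ℤ)*(n:ℤ) = ((b':ℕ):ℤ) + (k':ℤ)*(n:ℤ) := by omega
      have hbb' : ((b:ℕ):ℤ) = ((b':ℕ):ℤ) := by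
        have e1 := hbcast b k
        have e2 := hbcast b' k'
        rw [h2'] at e1
        rw [e1] at e2
        exact e2
      have hbb : b = b' := by
        have : (b:ℕ) = (b':ℕ) := by exact_mod_cast hbb'
        exact Fin.ext this
      have hkk : k = k' := by
        have hm : (k:ℤ)*(n:ℤ) = (k':ℤ)*(n:ℤ) := by omega
        have : (k:ℤ) = (k':ℤ) := mul_right_cancel₀ (ne_of_gt hN) hm
        exact_mod_cast this
      subst haa; subst hbb; subst hkk
      rfl
    · rintro ⟨⟨i,j⟩, h1, h2, h3, h4⟩
      set q := (j-1) / (n:ℤ) with hq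
      set r := (j-1) % (n:ℤ) with hr
      have hr0 : 0 ≤ r := Int.emod_nonneg _ (ne_of_gt hN)
      have hrN : r < (n:ℤ) := Int.emod_lt_of_pos _ hN
      have hqr : q*(n:ℤ) + r = j-1 := by
        have := Int.mul_ediv_add_emod (j-1) (n:ℤ)
        rw [hq, hr]; linarith [Int.mul_ediv_add_emod (j-1) (n:ℤ), mul_comm (n:ℤ) ((j-1)/(n:ℤ))]
      have hq0 : 0 ≤ q := by
        by_contra hq0
        push_neg at hq0
        have hq1 : q ≤ -1 := by omega
        have : q*(n:ℤ) ≤ (-1)*(n:ℤ) := mul_le_mul_of_nonneg_right hq1 (le_of_lt hN)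
        omega
      refine ⟨⟨(⟨(i-1).toNat, by omega⟩, ⟨r.toNat, by omega⟩),
        ⟨q.toNat, ?_⟩⟩, ?_⟩
      · rw [Finset.mem_Ico]
        set a : Fin n := ⟨(i-1).toNat, by omega⟩ with ha
        set b : Fin n := ⟨r.toNat, by omega⟩ with hb
        have hav : ((a:ℕ):ℤ) = i - 1 := by
          rw [ha]; simp; omega
        have hbv : ((b:ℕ):ℤ) = r := by
          rw [hb]; simp; omega
        have hkv : ((q.toNat:ℕ):ℤ) = q := by omega
        apply (key a b q.toNat).mpr
        rw [hav, hbv, hkv]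
        have hj : ((r:ℤ) + 1 + q * (n:ℤ)) = j := by omega
        rw [hj]
        constructor
        · omega
        · have e : i - 1 + 1 = i := by ring
          rw [e]; exact h4
      · rw [hf]
        apply Subtype.ext
        simp only [Prod.mk.injEq]
        constructor
        · simp; omega
        · simp only [Int.toNat_of_nonneg hr0, Int.toNat_of_nonneg hq0]
          omega
  have hcard := Nat.card_eq_of_bijective f hbijf
  rw [affLength, ← hcard, Nat.card_eq_fintype_card, Fintype.card_sigma]
  apply Finset.sum_congr rfl
  intro p _
  rw [Fintype.card_coe]

/-- if w is the affine permutation of type Â_{n−1} with affine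
permutation matrix ∑ t^{cᵢ} E_{σ(i),i} (so w(i) = σ(i) − cᵢn for 1 ≤ i ≤ n and
w(i+n) = w(i)+n), with ∑cᵢ = 0, then
l(w) = ∑_{1≤i<j≤n} |cᵢ − cⱼ − f_σ(i,j)| where f_σ(i,j) = 0 if σ(i) < σ(j), else 1. -/
theorem affine_length_formula (n : ℕ) [NeZero n]
    (σ : Equiv.Perm (Fin n)) (c : Fin n → ℤ) (hsum : ∑ i, c i = 0)
    (w : ℤ → ℤ) (hbij : Function.Bijective w)
    (hper : ∀ i : ℤ, w (i + n) = w i + n)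
    (hw : ∀ i : Fin n, w ((i : ℕ) + 1) = ((σ i : ℕ) + 1 : ℤ) - c i * n) :
    affLength n w =
      ∑ p ∈ Finset.univ.filter (fun p : Fin n × Fin n => p.1 < p.2),
        (c p.1 - c p.2 - (if σ p.1 < σ p.2 then 0 else 1)).natAbs := by
  classical
  have hN : 0 < (n:ℤ) := by
    have := Nat.pos_of_ne_zero (NeZero.ne n); exact_mod_cast this
  set g : Fin n × Fin n → ℕ := fun p =>
      (Finset.Ico (if p.1 < p.2 then (0:ℕ) else 1)
        ((-(-(w (((p.1:ℕ):ℤ)+1) - w (((p.2:ℕ):ℤ)+1)) / (n:ℤ))).toNat)).card with hg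
  rw [affcount n (Nat.pos_of_ne_zero (NeZero.ne n)) w hper]
  have hD : ∀ a b : Fin n, w (((a:ℕ):ℤ)+1) - w (((b:ℕ):ℤ)+1) =
      ((((σ a):ℕ):ℤ) - (((σ b):ℕ):ℤ)) + (c b - c a)*(n:ℤ) := by
    intro a b; rw [hw a, hw b]; ring
  have hKval : ∀ a b : Fin n, a ≠ b →
      -(-(w (((a:ℕ):ℤ)+1) - w (((b:ℕ):ℤ)+1)) / (n:ℤ)) =
        (c b - c a) + (if σ b < σ a then 1 else 0) := by
    intro a b hab
    rw [hD a b]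
    have hσ : σ a ≠ σ b := fun h => hab (σ.injective h)
    have hσv : ((σ a:ℕ):ℤ) ≠ ((σ b:ℕ):ℤ) := by
      intro h
      exact hσ (Fin.ext (by exact_mod_cast h))
    have hb1 : ((σ a:ℕ):ℤ) < (n:ℤ) := by exact_mod_cast (σ a).isLt
    have hb2 : ((σ b:ℕ):ℤ) < (n:ℤ) := by exact_mod_cast (σ b).isLt
    have hb3 : (0:ℤ) ≤ ((σ a:ℕ):ℤ) := by positivity
    have hb4 : (0:ℤ) ≤ ((σ b:ℕ):ℤ) := by positivity
    set s : ℤ := (((σ a):ℕ):ℤ) - (((σ b):ℕ):ℤ) with hs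
    have e : -(s + (c b - c a)*(n:ℤ)) = -s + (-(c b - c a))*(n:ℤ) := by ring
    rw [e, Int.add_mul_ediv_right _ _ (ne_of_gt hN)]
    by_cases hlt : σ b < σ a
    · have hv : ((σ b):ℕ) < ((σ a):ℕ) := hlt
      have hspos : 0 < s := by rw [hs]; omega
      rw [if_pos hlt, affediv_neg hspos (by omega)]
      ring
    · have hv : ((σ a):ℕ) < ((σ b):ℕ) := by
        have := Fin.lt_or_lt_of_ne hσ
        rcases this with h | h
        · exact h
        · exact absurd h hlt
      have hsneg : s < 0 := by rw [hs]; omega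
      have hz : -s / (n:ℤ) = 0 := Int.ediv_eq_zero_of_lt (by omega) (by omega)
      rw [if_neg hlt, hz]
      ring
  -- split sum
  have split1 := Finset.sum_filter_add_sum_filter_not Finset.univ
      (fun p : Fin n × Fin n => p.1 < p.2) g
  have split2 := Finset.sum_filter_add_sum_filter_not
      (Finset.univ.filter (fun p : Fin n × Fin n => ¬ p.1 < p.2))
      (fun p : Fin n × Fin n => p.2 < p.1) g
  have e_gt : (Finset.univ.filter (fun p : Fin n × Fin n => ¬ p.1 < p.2)).filter
      (fun p => p.2 < p.1) = Finset.univ.filter (fun p : Fin n × Fin n => p.2 < p.1) := by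
    ext p
    simp only [Finset.mem_filter, Finset.mem_univ, true_and, Fin.lt_def]
    omega
  have e_diag : ∑ p ∈ (Finset.univ.filter (fun p : Fin n × Fin n => ¬ p.1 < p.2)).filter
      (fun p => ¬ p.2 < p.1), g p = 0 := by
    apply Finset.sum_eq_zero
    intro p hp
    simp only [Finset.mem_filter, Finset.mem_univ, true_and] at hp
    have hpe : p.1 = p.2 := le_antisymm (not_lt.mp hp.2) (not_lt.mp hp.1)
    rw [hg]
    simp only [if_neg hp.1, hpe, sub_self, neg_zero, Int.zero_ediv, neg_zero,
      Int.toNat_zero]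
    simp
  -- swap
  have e_swap : ∑ p ∈ Finset.univ.filter (fun p : Fin n × Fin n => p.2 < p.1), g p
      = ∑ p ∈ Finset.univ.filter (fun p : Fin n × Fin n => p.1 < p.2), g (p.2, p.1) := by
    apply Finset.sum_nbij' (fun p => (p.2, p.1)) (fun p => (p.2, p.1))
    · intro a ha; simp only [Finset.mem_filter, Finset.mem_univ, true_and] at ha ⊢; exact ha
    · intro a ha; simp only [Finset.mem_filter, Finset.mem_univ, true_and] at ha ⊢; exact ha
    · intro a _; rfl
    · intro a _; rfl
    · intro a _; rfl
  have total : ∑ p : Fin n × Fin n, g p =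
      ∑ p ∈ Finset.univ.filter (fun p : Fin n × Fin n => p.1 < p.2), (g p + g (p.2, p.1)) := by
    calc ∑ p : Fin n × Fin n, g p
        = ∑ p ∈ Finset.univ.filter (fun p : Fin n × Fin n => p.1 < p.2), g p
          + ∑ p ∈ Finset.univ.filter (fun p : Fin n × Fin n => ¬ p.1 < p.2), g p := by
          exact split1.symm
      _ = ∑ p ∈ Finset.univ.filter (fun p : Fin n × Fin n => p.1 < p.2), g p
          + (∑ p ∈ (Finset.univ.filter (fun p : Fin n × Fin n => ¬ p.1 < p.2)).filter
              (fun p => p.2 < p.1), g p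
            + ∑ p ∈ (Finset.univ.filter (fun p : Fin n × Fin n => ¬ p.1 < p.2)).filter
              (fun p => ¬ p.2 < p.1), g p) := by rw [split2]
      _ = ∑ p ∈ Finset.univ.filter (fun p : Fin n × Fin n => p.1 < p.2), g p
          + ∑ p ∈ Finset.univ.filter (fun p : Fin n × Fin n => p.2 < p.1), g p := by
          rw [e_gt, e_diag, add_zero]
      _ = ∑ p ∈ Finset.univ.filter (fun p : Fin n × Fin n => p.1 < p.2), g p
          + ∑ p ∈ Finset.univ.filter (fun p : Fin n × Fin n => p.1 < p.2), g (p.2, p.1) := by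
          rw [e_swap]
      _ = ∑ p ∈ Finset.univ.filter (fun p : Fin n × Fin n => p.1 < p.2), (g p + g (p.2, p.1)) := by
          rw [Finset.sum_add_distrib]
  rw [total]
  apply Finset.sum_congr rfl
  intro p hp
  simp only [Finset.mem_filter, Finset.mem_univ, true_and] at hp
  obtain ⟨a, b⟩ := p
  simp only at hp ⊢
  have hab : a ≠ b := ne_of_lt hp
  have hK1 := hKval a b hab
  have hK2 := hKval b a hab.symm
  rw [hg]
  simp only [if_pos hp, if_neg (by exact fun h => absurd (lt_trans hp h) (lt_irrefl a))]
  rw [hK1, hK2, Nat.card_Ico, Nat.card_Ico]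
  have hσ : σ a ≠ σ b := fun h => hab (σ.injective h)
  rcases Fin.lt_or_lt_of_ne hσ with h | h
  · rw [if_neg (by exact fun hh => absurd (lt_trans h hh) (lt_irrefl (σ a))),
      if_pos h, if_pos h]
    omega
  · rw [if_pos h, if_neg (by exact fun hh => absurd (lt_trans h hh) (lt_irrefl (σ b))),
      if_neg (by exact fun hh => absurd (lt_trans h hh) (lt_irrefl (σ b)))]
    omega
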